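/- Let Z ~ N(0,1) and for ν² > 0 let R = Z·ν₀/ν where ν₀² is the true variance. Define ψ(w, ν²) = ω_c(w/ν)² (w/ν)² − a(c), where ω_c is the Huber weight function and a(c) = E[ω_c(Z)² Z²]. Then the map ν² ↦ E[ψ(W, ν²)], with W = ν₀ Z, is strictly decreasing in ν² on (0,∞), and consequently E[ψ(W, ν²)] = 0 if and only if ν² = ν₀². -/

import Mathlib

open MeasureTheory ProbabilityTheory Set

lemma huber_aux_integrable (c t : ℝ) (ht : 0 ≤ t) :
    Integrable (fun z : ℝ => min (t * z ^ 2) (c ^ 2)) (gaussianReal 0 1) := by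
  refine Integrable.mono' (integrable_const (c ^ 2))
    ((continuous_const.mul (continuous_pow 2)).min continuous_const).aestronglyMeasurable
    (ae_of_all _ fun z => ?_)
  rw [Real.norm_eq_abs, abs_le]
  constructor
  · have h1 : (0:ℝ) ≤ t * z ^ 2 := mul_nonneg ht (sq_nonneg z)
    have h2 : (0:ℝ) ≤ c ^ 2 := sq_nonneg c
    have : (0:ℝ) ≤ min (t * z ^ 2) (c ^ 2) := le_min h1 h2
    linarith [sq_nonneg c]
  · exact min_le_right _ _

lemma huber_aux_mono (c : ℝ) (hc : 0 < c) {t₁ t₂ : ℝ} (ht₁ : 0 ≤ t₁) (h12 : t₁ < t₂) :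
    (∫ z, min (t₁ * z ^ 2) (c ^ 2) ∂(gaussianReal 0 1)) <
      ∫ z, min (t₂ * z ^ 2) (c ^ 2) ∂(gaussianReal 0 1) := by
  have ht₂ : 0 ≤ t₂ := le_of_lt (lt_of_le_of_lt ht₁ h12)
  have ht₂' : 0 < t₂ := lt_of_le_of_lt ht₁ h12
  set h : ℝ → ℝ := fun z => min (t₂ * z ^ 2) (c ^ 2) - min (t₁ * z ^ 2) (c ^ 2) with hh
  have hnn : ∀ z, 0 ≤ h z := by
    intro z
    have : t₁ * z ^ 2 ≤ t₂ * z ^ 2 := mul_le_mul_of_nonneg_right h12.le (sq_nonneg z)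
    simp only [hh, sub_nonneg]
    exact min_le_min this le_rfl
  have hint : Integrable h (gaussianReal 0 1) :=
    (huber_aux_integrable c t₂ ht₂).sub (huber_aux_integrable c t₁ ht₁)
  have hpos : 0 < ∫ z, h z ∂(gaussianReal 0 1) := by
    rw [integral_pos_iff_support_of_nonneg hnn hint]
    have hsub : Ioo (0:ℝ) (c / Real.sqrt t₂) ⊆ Function.support h := by
      intro z hz
      have hz0 : 0 < z := hz.1
      have hzc : z < c / Real.sqrt t₂ := hz.2
      have hst : 0 < Real.sqrt t₂ := Real.sqrt_pos.2 ht₂'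
      have h1 : Real.sqrt t₂ * z < c := by
        rw [lt_div_iff₀ hst] at hzc; linarith [hzc]
      have h2 : t₂ * z ^ 2 < c ^ 2 := by
        have h4 := mul_self_lt_mul_self (mul_nonneg hst.le hz0.le) h1
        nlinarith [Real.sq_sqrt ht₂]
      have h3 : t₁ * z ^ 2 < c ^ 2 :=
        lt_of_le_of_lt (mul_le_mul_of_nonneg_right h12.le (sq_nonneg z)) h2
      have : h z = (t₂ - t₁) * z ^ 2 := by
        simp only [hh, min_eq_left h2.le, min_eq_left h3.le]; ring
      simp only [Function.mem_support, this]
      exact (mul_pos (sub_pos.2 h12) (pow_pos hz0 2)).ne'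
    have hvol : (0:ENNReal) < volume (Ioo (0:ℝ) (c / Real.sqrt t₂)) := by
      rw [Real.volume_Ioo]
      have : (0:ℝ) < c / Real.sqrt t₂ := div_pos hc (Real.sqrt_pos.2 ht₂')
      simp [ENNReal.ofReal_pos, this]
    have hγ : (0:ENNReal) < gaussianReal 0 1 (Ioo (0:ℝ) (c / Real.sqrt t₂)) := by
      by_contra hcon
      push_neg at hcon
      have h0 : gaussianReal 0 1 (Ioo (0:ℝ) (c / Real.sqrt t₂)) = 0 := le_antisymm hcon zero_le
      have := gaussianReal_absolutelyContinuous' 0 (v := 1) one_ne_zero h0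
      exact absurd this hvol.ne'
    exact lt_of_lt_of_le hγ (measure_mono hsub)
  have := integral_sub (huber_aux_integrable c t₂ ht₂) (huber_aux_integrable c t₁ ht₁)
  simp only [hh] at hpos
  rw [this] at hpos
  linarith

/-- with `W = ν₀ Z`, `Z` standard Gaussian, and the Huber proposal-2
score `ψ(w, ν²) = min((w/ν)², c²) − a(c)` with `a(c) = E[min(Z², c²)]`, the map
`ν² ↦ E[ψ(W, ν²)]` is strictly decreasing on `(0,∞)` and vanishes iff `ν² = ν₀²`. -/
theorem huber_wv_identifiability
    (c ν₀sq : ℝ) (hc : 0 < c) (hν₀ : 0 < ν₀sq)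
    (a : ℝ)
    (ha : a = ∫ z, min (z ^ 2) (c ^ 2) ∂(gaussianReal 0 1))
    (F : ℝ → ℝ)
    (hF : ∀ νsq : ℝ, F νsq =
      (∫ z, min ((Real.sqrt ν₀sq * z / Real.sqrt νsq) ^ 2) (c ^ 2)
        ∂(gaussianReal 0 1)) - a) :
    StrictAntiOn F (Ioi (0 : ℝ)) ∧
      ∀ νsq ∈ Ioi (0 : ℝ), (F νsq = 0 ↔ νsq = ν₀sq) := by
  -- rewrite F in terms of g
  have hrw : ∀ νsq : ℝ, 0 < νsq → F νsq =
      (∫ z, min (ν₀sq / νsq * z ^ 2) (c ^ 2) ∂(gaussianReal 0 1)) - a := by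
    intro νsq hν
    rw [hF]
    congr 1
    refine integral_congr_ae (ae_of_all _ fun z => ?_)
    have hz : (Real.sqrt ν₀sq * z / Real.sqrt νsq) ^ 2 = ν₀sq / νsq * z ^ 2 := by
      rw [div_pow, mul_pow, Real.sq_sqrt hν₀.le, Real.sq_sqrt hν.le]; ring
    simp only [hz]
  have ha1 : a = ∫ z, min ((1:ℝ) * z ^ 2) (c ^ 2) ∂(gaussianReal 0 1) := by
    rw [ha]; congr 1; funext z; rw [one_mul]
  have hanti : StrictAntiOn F (Ioi (0 : ℝ)) := by
    intro x hx y hy hxy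
    rw [mem_Ioi] at hx hy
    rw [hrw x hx, hrw y hy]
    have hlt : ν₀sq / y < ν₀sq / x := div_lt_div_of_pos_left hν₀ hx hxy
    have := huber_aux_mono c hc (div_nonneg hν₀.le hy.le) hlt
    linarith
  refine ⟨hanti, fun νsq hν => ?_⟩
  rw [mem_Ioi] at hν
  have hFν₀ : F ν₀sq = 0 := by
    rw [hrw ν₀sq hν₀, ha1, div_self hν₀.ne', sub_eq_zero]
  constructor
  · intro h0
    exact hanti.injOn (mem_Ioi.2 hν) (mem_Ioi.2 hν₀) (by rw [h0, hFν₀])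
  · intro h; rw [h, hFν₀]
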